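/- The restriction of the spectrum map χ to any single orbit of the sorting action of S(r) on Walk_r(ρ,σ) is injective, and its image is the corresponding orbit of S(r) acting on {2,…,d}^r by permuting coordinates. -/

import Mathlib

/-- A transposition step `(s t)` of `S(d)` recorded with `s < t`; its colour is `t`. -/
def Step (d : ℕ) : Type := {p : Fin d × Fin d // p.1 < p.2}

/-- The permutation (transposition) corresponding to a step. -/
def stepPerm {d : ℕ} (x : Step d) : Equiv.Perm (Fin d) := Equiv.swap x.1.1 x.1.2

/-- The colour of a step, i.e. the larger of the two interchanged points. -/
def colour {d : ℕ} (x : Step d) : Fin d := x.1.2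

/-- The product of a tuple of steps, taken in order. -/
def stepProd {d r : ℕ} (W : Fin r → Step d) : Equiv.Perm (Fin d) :=
  (List.ofFn fun j => stepPerm (W j)).prod

/-- Conjugation of the step `x` by the step `c`, recorded again as a step. -/
def conjStep {d : ℕ} (c x : Step d) : Step d :=
  if h : stepPerm c x.1.1 < stepPerm c x.1.2 then
    ⟨(stepPerm c x.1.1, stepPerm c x.1.2), h⟩
  else
    ⟨(stepPerm c x.1.2, stepPerm c x.1.1),
      lt_of_le_of_ne (not_lt.mp h)
        (fun he => absurd ((stepPerm c).injective he) (ne_of_gt x.2))⟩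

/-- The sorting operator `R_i`: swap steps `i` and `i+1`, conjugating the step of
larger colour by the step of smaller colour; do nothing if the colours agree. -/
def Rop {d r : ℕ} (i : ℕ) (h : i + 1 < r) (W : Fin r → Step d) : Fin r → Step d :=
  let i0 : Fin r := ⟨i, Nat.lt_of_succ_lt h⟩
  let i1 : Fin r := ⟨i + 1, h⟩
  let a := W i0
  let b := W i1
  if colour a < colour b then
    Function.update (Function.update W i0 (conjStep a b)) i1 a
  else if colour b < colour a then
    Function.update (Function.update W i0 b) i1 (conjStep b a)
  else W

/-- The set of `r`-step walks on the transposition Cayley graph of `S(d)` from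
`ρ` to `σ`, encoded as tuples of steps with `ρ * (product of steps) = σ`. -/
def Walk (d r : ℕ) (ρ σ : Equiv.Perm (Fin d)) : Type :=
  {W : Fin r → Step d // ρ * stepProd W = σ}

/-- The spectrum of a walk: the sequence of colours of its steps. -/
def spec {d r : ℕ} {ρ σ : Equiv.Perm (Fin d)} (W : Walk d r ρ σ) : Fin r → Fin d :=
  fun j => colour (W.val j)

/-- The generator condition characterizing the sorting action: the homomorphism
`R : S(r) → Aut(Walk_r(ρ,σ))` sends each Coxeter generator `(i i+1)` to `R_i`. -/
def IsSortingAction {d r : ℕ} {ρ σ : Equiv.Perm (Fin d)}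
    (R : Equiv.Perm (Fin r) →* Equiv.Perm (Walk d r ρ σ)) : Prop :=
  ∀ (i : ℕ) (h : i + 1 < r) (W : Walk d r ρ σ),
    (R (Equiv.swap (⟨i, Nat.lt_of_succ_lt h⟩ : Fin r) (⟨i + 1, h⟩ : Fin r)) W).val
      = Rop i h W.val

section Aux

lemma colour_conjStep {d : ℕ} {c x : Step d} (h : colour c < colour x) :
    colour (conjStep c x) = colour x := by
  have h1 : c.1.1 < x.1.2 := lt_trans c.2 h
  have hfix : stepPerm c x.1.2 = x.1.2 :=
    Equiv.swap_apply_of_ne_of_ne (ne_of_gt h1) (ne_of_gt h)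
  have hlt : stepPerm c x.1.1 < x.1.2 := by
    unfold stepPerm
    rcases eq_or_ne x.1.1 c.1.1 with h' | h'
    · rw [h', Equiv.swap_apply_left]; exact h
    rcases eq_or_ne x.1.1 c.1.2 with h'' | h''
    · rw [h'', Equiv.swap_apply_right]; exact h1
    · rw [Equiv.swap_apply_of_ne_of_ne h' h'']; exact x.2
  have hcond : stepPerm c x.1.1 < stepPerm c x.1.2 := by rw [hfix]; exact hlt
  simp only [conjStep, dif_pos hcond, colour]
  exact (congrArg (fun s : Step d => s.1.2) (dif_pos hcond : conjStep c x = ⟨(stepPerm c x.1.1, stepPerm c x.1.2), hcond⟩)).trans hfix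

lemma Rop_eq_self {d r : ℕ} (i : ℕ) (h : i + 1 < r) (W : Fin r → Step d)
    (hc : colour (W ⟨i, Nat.lt_of_succ_lt h⟩) = colour (W ⟨i + 1, h⟩)) :
    Rop i h W = W := by
  simp only [Rop]
  rw [if_neg (by rw [hc]; exact lt_irrefl _), if_neg (by rw [hc]; exact lt_irrefl _)]

lemma spec_Rop {d r : ℕ} (i : ℕ) (h : i + 1 < r) (W : Fin r → Step d) :
    (fun j => colour (Rop i h W j)) =
      (fun j => colour (W j)) ∘
        (Equiv.swap (⟨i, Nat.lt_of_succ_lt h⟩ : Fin r) ⟨i + 1, h⟩) := by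
  set i0 : Fin r := ⟨i, Nat.lt_of_succ_lt h⟩ with hi0
  set i1 : Fin r := ⟨i + 1, h⟩ with hi1
  have hne : i0 ≠ i1 := by simp [hi0, hi1, Fin.ext_iff]
  funext j
  simp only [Function.comp, Rop]
  by_cases hj0 : j = i0
  · subst hj0
    rw [Equiv.swap_apply_left]
    split_ifs with h1 h2
    · rw [Function.update_of_ne hne, Function.update_self]
      exact colour_conjStep h1
    · rw [Function.update_of_ne hne, Function.update_self]
    · exact le_antisymm (not_lt.mp h2) (not_lt.mp h1)
  by_cases hj1 : j = i1
  · subst hj1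
    rw [Equiv.swap_apply_right]
    split_ifs with h1 h2
    · rw [Function.update_self]
    · rw [Function.update_self]
      exact colour_conjStep h2
    · exact (le_antisymm (not_lt.mp h2) (not_lt.mp h1)).symm
  · rw [Equiv.swap_apply_of_ne_of_ne hj0 hj1]
    split_ifs with h1 h2 <;>
      simp [Function.update_apply, show ¬ j = ⟨i, Nat.lt_of_succ_lt h⟩ from hj0, show ¬ j = ⟨i + 1, h⟩ from hj1]

lemma key {d r : ℕ} {ρ σ : Equiv.Perm (Fin d)}
    (R : Equiv.Perm (Fin r) →* Equiv.Perm (Walk d r ρ σ)) (hR : IsSortingAction R) :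
    ∀ n : ℕ, ∀ j k : Fin r, j < k → (k : ℕ) - (j : ℕ) = n →
      (∀ W, spec (R (Equiv.swap j k) W) = spec W ∘ (Equiv.swap j k)) ∧
      (∀ W, spec W j = spec W k → R (Equiv.swap j k) W = W) := by
  intro n
  induction n using Nat.strong_induction_on with
  | _ n IH =>
    intro j k hjk hn
    have hjk' : (j : ℕ) < (k : ℕ) := hjk
    rcases Nat.lt_or_ge ((j : ℕ) + 1) (k : ℕ) with hlt | hge
    · -- non-adjacent case
      have hm : (k : ℕ) - 1 < r := lt_of_le_of_lt (Nat.sub_le _ _) k.isLt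
      set m : Fin r := ⟨(k : ℕ) - 1, hm⟩ with hm_def
      have hjm : j < m := by
        rw [Fin.lt_def]; simp only [hm_def]; omega
      have hmk : m < k := by
        rw [Fin.lt_def]; simp only [hm_def]; omega
      obtain ⟨S1, S2⟩ := IH 1 (by omega) m k hmk (by simp [hm_def]; omega)
      obtain ⟨T1, T2⟩ := IH (n - 1) (by omega) j m hjm (by simp [hm_def]; omega)
      have hsj : (Equiv.swap m k) j = j :=
        Equiv.swap_apply_of_ne_of_ne (ne_of_lt hjm) (ne_of_lt hjk)
      have hswap : Equiv.swap j k =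
          Equiv.swap m k * (Equiv.swap j m * Equiv.swap m k) := by
        have h1 := Equiv.swap_apply_apply (Equiv.swap m k) j m
        rw [hsj, Equiv.swap_apply_left, Equiv.swap_inv] at h1
        rw [h1, mul_assoc]
      constructor
      · intro W
        rw [hswap, map_mul, map_mul]
        simp only [Equiv.Perm.mul_apply]
        rw [S1, T1, S1]
        funext l
        simp [Equiv.Perm.mul_apply]
      · intro W hc
        rw [hswap, map_mul, map_mul]
        simp only [Equiv.Perm.mul_apply]
        have hc1 : spec (R (Equiv.swap m k) W) j = spec (R (Equiv.swap m k) W) m := by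
          rw [S1]
          simp only [Function.comp]
          rw [hsj, Equiv.swap_apply_left]
          exact hc
        rw [T2 _ hc1, ← Equiv.Perm.mul_apply, ← map_mul, Equiv.swap_mul_self, map_one,
          Equiv.Perm.one_apply]
    · -- adjacent case : (k : ℕ) = (j : ℕ) + 1
      have h' : (j : ℕ) + 1 < r := by
        have := k.isLt; omega
      have hk : k = ⟨(j : ℕ) + 1, h'⟩ := Fin.ext (by simp; omega)
      have hval : ∀ W : Walk d r ρ σ,
          (R (Equiv.swap j k) W).val = Rop (j : ℕ) h' W.val := by
        intro W
        rw [hk]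
        exact hR (j : ℕ) h' W
      constructor
      · intro W
        funext l
        show colour ((R (Equiv.swap j k) W).val l) = spec W (Equiv.swap j k l)
        rw [hval W, hk]
        exact congrFun (spec_Rop (j : ℕ) h' W.val) l
      · intro W hc
        apply Subtype.ext
        rw [hval W]
        apply Rop_eq_self
        rw [hk] at hc
        exact hc

lemma specR {d r : ℕ} {ρ σ : Equiv.Perm (Fin d)}
    (R : Equiv.Perm (Fin r) →* Equiv.Perm (Walk d r ρ σ)) (hR : IsSortingAction R) :
    ∀ (π : Equiv.Perm (Fin r)) (W : Walk d r ρ σ),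
      spec (R π W) = spec W ∘ ⇑π⁻¹ := by
  have hswap : ∀ (a b : Fin r), a ≠ b → ∀ W,
      spec (R (Equiv.swap a b) W) = spec W ∘ ⇑(Equiv.swap a b) := by
    intro a b hab W
    rcases hab.lt_or_gt with h | h
    · exact (key R hR _ a b h rfl).1 W
    · rw [Equiv.swap_comm]
      exact (key R hR _ b a h rfl).1 W
  intro π
  have hπ : π ∈ Subgroup.closure {τ : Equiv.Perm (Fin r) | τ.IsSwap} := by
    rw [Equiv.Perm.closure_isSwap]; trivial
  induction hπ using Subgroup.closure_induction with
  | mem x hx =>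
    obtain ⟨a, b, hab, rfl⟩ := hx
    intro W
    rw [hswap a b hab W, Equiv.swap_inv]
  | one =>
    intro W
    simp only [map_one, Equiv.Perm.one_apply, inv_one, Equiv.Perm.coe_one]
    rfl
  | mul x y hx hy px py =>
    intro W
    rw [map_mul, Equiv.Perm.mul_apply, px, py]
    funext l
    simp [mul_inv_rev, Equiv.Perm.mul_apply]
  | inv x hx px =>
    intro W
    have h1 : spec (R x (R x⁻¹ W)) = spec (R x⁻¹ W) ∘ ⇑x⁻¹ := px _
    have h2 : R x (R x⁻¹ W) = W := by
      rw [← Equiv.Perm.mul_apply, ← map_mul, mul_inv_cancel, map_one, Equiv.Perm.one_apply]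
    rw [h2] at h1
    rw [inv_inv]
    funext l
    have := congrFun h1 (x l)
    simp only [Function.comp] at this ⊢
    rw [show ∀ (f : Equiv.Perm (Fin r)) a, f⁻¹ (f a) = a from fun f a => f.symm_apply_apply a] at this
    exact this.symm

lemma stabFix {d r : ℕ} {ρ σ : Equiv.Perm (Fin d)}
    (R : Equiv.Perm (Fin r) →* Equiv.Perm (Walk d r ρ σ)) (hR : IsSortingAction R) :
    ∀ (π : Equiv.Perm (Fin r)) (W : Walk d r ρ σ),
      spec W ∘ ⇑π = spec W → R π W = W := by
  suffices h : ∀ n (π : Equiv.Perm (Fin r)), π.support.card = n →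
      ∀ W : Walk d r ρ σ, spec W ∘ ⇑π = spec W → R π W = W by
    intro π W hW; exact h _ π rfl W hW
  intro n
  induction n using Nat.strong_induction_on with
  | _ n IH =>
    intro π hn W hW
    rcases eq_or_ne π 1 with rfl | h1
    · simp only [map_one, Equiv.Perm.one_apply]
    · obtain ⟨j, hj⟩ : ∃ j, π j ≠ j := by
        by_contra hc
        push_neg at hc
        exact h1 (Equiv.ext hc)
      set τ := Equiv.swap j (π j) with hτ
      have hlt := Equiv.Perm.card_support_swap_mul hj
      have hspecτ : ∀ l, spec W (τ l) = spec W l := by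
        intro l
        rcases eq_or_ne l j with rfl | hl1
        · rw [hτ, Equiv.swap_apply_left]; exact congrFun hW l
        rcases eq_or_ne l (π j) with rfl | hl2
        · rw [hτ, Equiv.swap_apply_right]; exact (congrFun hW j).symm
        · rw [hτ, Equiv.swap_apply_of_ne_of_ne hl1 hl2]
      have hspec2 : spec W ∘ ⇑(τ * π) = spec W := by
        funext l
        simp only [Function.comp, Equiv.Perm.mul_apply]
        rw [hspecτ (π l)]
        exact congrFun hW l
      have hτfix : R τ W = W := by
        have hcol : spec W j = spec W (π j) := (congrFun hW j).symm
        rcases (Ne.symm hj).lt_or_gt with h | h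
        · exact (key R hR _ j (π j) h rfl).2 W hcol
        · rw [hτ, Equiv.swap_comm]
          exact (key R hR _ (π j) j h rfl).2 W hcol.symm
      have hfix2 : R (τ * π) W = W := IH _ (hn ▸ hlt) (τ * π) rfl W hspec2
      have hπ2 : π = τ * (τ * π) := by
        rw [← mul_assoc, Equiv.swap_mul_self, one_mul]
      rw [hπ2, map_mul, Equiv.Perm.mul_apply, hfix2, hτfix]

end Aux

/-- The spectrum map `χ` is injective on every orbit of the sorting action, and
its image on the orbit of `W` is the orbit of the spectrum of `W` under the
action of `S(r)` permuting coordinates. -/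
theorem stmt9 (d r : ℕ) (ρ σ : Equiv.Perm (Fin d))
    (R : Equiv.Perm (Fin r) →* Equiv.Perm (Walk d r ρ σ)) (hR : IsSortingAction R)
    (W : Walk d r ρ σ) :
    (∀ π₁ π₂ : Equiv.Perm (Fin r),
      spec (R π₁ W) = spec (R π₂ W) → R π₁ W = R π₂ W) ∧
    (Set.range fun π : Equiv.Perm (Fin r) => spec (R π W)) =
      (Set.range fun π : Equiv.Perm (Fin r) => spec W ∘ π) := by
  have hspecR := specR R hR
  have hstab := stabFix R hR
  constructor
  · intro π₁ π₂ hspec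
    have hτ : spec W ∘ ⇑(π₁⁻¹ * π₂) = spec W := by
      funext l
      simp only [Function.comp, Equiv.Perm.mul_apply]
      have h := congrFun ((hspecR π₁ W).symm.trans (hspec.trans (hspecR π₂ W))) (π₂ l)
      simp only [Function.comp] at h
      rw [show ∀ (f : Equiv.Perm (Fin r)) a, f⁻¹ (f a) = a from fun f a => f.symm_apply_apply a] at h
      exact h
    have hfix := hstab (π₁⁻¹ * π₂) W hτ
    calc R π₁ W = R π₁ (R (π₁⁻¹ * π₂) W) := by rw [hfix]
      _ = R π₂ W := by
          rw [← Equiv.Perm.mul_apply, ← map_mul, ← mul_assoc, mul_inv_cancel, one_mul]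
  · ext f
    simp only [Set.mem_range]
    constructor
    · rintro ⟨π, rfl⟩
      exact ⟨π⁻¹, (hspecR π W).symm⟩
    · rintro ⟨π, rfl⟩
      exact ⟨π⁻¹, by rw [hspecR π⁻¹ W, inv_inv]⟩
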